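/- Let n ≥ 4. The set of inner products {⟨û₁, w(û₁)⟩ : w ∈ W(Dₙ)} equals {(n − 4k)/n : k a natural number with 2k ≤ n}. (Equivalently: the possible distances between two vertices of type 1 of the Coxeter complex of type Dₙ are exactly arccos((n−4k)/n) for k = 0, 1, …, ⌊n/2⌋.) -/

import Mathlib

noncomputable section

open scoped RealInnerProductSpace

/-- The fundamental root vectors of the root system of type `Dₙ` in `ℝⁿ`:
`r₁ = e₁ + e₂` and `rᵢ = eᵢ − eᵢ₋₁` for `2 ≤ i ≤ n` (here indexed by `Fin n`,
with `j = 0` corresponding to `r₁`). -/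
def DnRoot (n : ℕ) : Fin n → EuclideanSpace ℝ (Fin n) := fun j =>
  if (j : ℕ) = 0 then WithLp.toLp 2 (fun i => if (i : ℕ) ≤ 1 then (1 : ℝ) else 0)
  else WithLp.toLp 2 (fun i => if (i : ℕ) = (j : ℕ) then (1 : ℝ)
        else if (i : ℕ) + 1 = (j : ℕ) then -1 else 0)

/-- The Weyl group `W(Dₙ)`: the subgroup of linear isometries of `ℝⁿ` generated by the
reflections `s_r(x) = x − 2(⟨x,r⟩/⟨r,r⟩)r` in the fundamental root vectors. -/
def WeylD (n : ℕ) : Subgroup (EuclideanSpace ℝ (Fin n) ≃ₗᵢ[ℝ] EuclideanSpace ℝ (Fin n)) :=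
  Subgroup.closure
    { f | ∃ j : Fin n, ∀ x : EuclideanSpace ℝ (Fin n),
        f x = x - ((2 * ⟪x, DnRoot n j⟫ / ⟪DnRoot n j, DnRoot n j⟫) • DnRoot n j) }

/-- `û₁ = (1,1,…,1)/√n`, a unit vector representing a vertex of type 1 of the
Coxeter complex of type `Dₙ`. -/
def u1hatD (n : ℕ) : EuclideanSpace ℝ (Fin n) := WithLp.toLp 2 (fun _ => 1 / Real.sqrt n)

namespace DnAux

variable {n : ℕ}

lemma sum_two (g : Fin n → ℝ) (a b : Fin n) (hab : a ≠ b)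
    (h : ∀ i, i ≠ a → i ≠ b → g i = 0) : ∑ i, g i = g a + g b := by
  classical
  rw [← Finset.sum_subset (Finset.subset_univ {a, b})]
  · rw [Finset.sum_pair hab]
  · intro x _ hx
    simp only [Finset.mem_insert, Finset.mem_singleton, not_or] at hx
    exact h x hx.1 hx.2

lemma inner_euc (x y : EuclideanSpace ℝ (Fin n)) : ⟪x, y⟫ = ∑ i, x i * y i := by
  simp [PiLp.inner_apply, RCLike.inner_apply, mul_comm]

lemma sub_smul_apply (x r : EuclideanSpace ℝ (Fin n)) (c : ℝ) (i : Fin n) :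
    (x - c • r) i = x i - c * r i := by
  simp

/-- abbreviation for the reflection formula -/
def formApply (n : ℕ) (j : Fin n) (x : EuclideanSpace ℝ (Fin n)) : EuclideanSpace ℝ (Fin n) :=
  x - ((2 * ⟪x, DnRoot n j⟫ / ⟪DnRoot n j, DnRoot n j⟫) • DnRoot n j)

lemma root_zero_apply {j : Fin n} (hj : (j : ℕ) = 0) (i : Fin n) :
    DnRoot n j i = if (i : ℕ) ≤ 1 then (1 : ℝ) else 0 := by
  simp [DnRoot, hj]

lemma root_pos_apply {j : Fin n} (hj : (j : ℕ) ≠ 0) (i : Fin n) :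
    DnRoot n j i = if (i : ℕ) = (j : ℕ) then (1 : ℝ)
      else if (i : ℕ) + 1 = (j : ℕ) then -1 else 0 := by
  simp [DnRoot, hj]

lemma inner_root_zero (hn : 2 ≤ n) {j : Fin n} (hj : (j : ℕ) = 0)
    (x : EuclideanSpace ℝ (Fin n)) :
    ⟪x, DnRoot n j⟫ = x ⟨0, by omega⟩ + x ⟨1, by omega⟩ := by
  rw [inner_euc]
  rw [sum_two _ ⟨0, by omega⟩ ⟨1, by omega⟩ (fun h => by simpa using Fin.mk.inj_iff.mp h)]
  · rw [root_zero_apply hj, root_zero_apply hj]; norm_num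
  · intro i h0 h1
    have h0' : (i : ℕ) ≠ 0 := fun h => h0 (Fin.ext h)
    have h1' : (i : ℕ) ≠ 1 := fun h => h1 (Fin.ext h)
    rw [root_zero_apply hj, if_neg (by omega), mul_zero]

lemma inner_root_root_zero (hn : 2 ≤ n) {j : Fin n} (hj : (j : ℕ) = 0) :
    ⟪DnRoot n j, DnRoot n j⟫ = 2 := by
  rw [inner_root_zero hn hj, root_zero_apply hj, root_zero_apply hj]
  norm_num

lemma jlt (j : Fin n) : (j : ℕ) - 1 < n := lt_of_le_of_lt (Nat.sub_le _ _) j.isLt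

lemma inner_root_pos {j : Fin n} (hj : (j : ℕ) ≠ 0) (x : EuclideanSpace ℝ (Fin n)) :
    ⟪x, DnRoot n j⟫ = x j - x ⟨(j : ℕ) - 1, jlt j⟩ := by
  have hlt : (j : ℕ) - 1 ≠ (j : ℕ) := by omega
  have hp1 : (j : ℕ) - 1 + 1 = (j : ℕ) := by omega
  rw [inner_euc]
  rw [sum_two _ j ⟨(j : ℕ) - 1, jlt j⟩ (fun h => hlt (by rw [← Fin.mk.inj_iff.mp h]))]
  · rw [root_pos_apply hj, root_pos_apply hj]
    simp only [Fin.val_mk]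
    rw [if_pos trivial, if_neg hlt, if_pos hp1]
    ring
  · intro i h0 h1
    have h0' : (i : ℕ) ≠ (j : ℕ) := fun h => h0 (Fin.ext h)
    have h1' : (i : ℕ) ≠ (j : ℕ) - 1 := fun h => h1 (Fin.ext h)
    rw [root_pos_apply hj, if_neg h0', if_neg (by omega), mul_zero]

lemma inner_root_root_pos {j : Fin n} (hj : (j : ℕ) ≠ 0) :
    ⟪DnRoot n j, DnRoot n j⟫ = 2 := by
  have hlt : (j : ℕ) - 1 ≠ (j : ℕ) := by omega
  have hp1 : (j : ℕ) - 1 + 1 = (j : ℕ) := by omega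
  rw [inner_root_pos hj, root_pos_apply hj, root_pos_apply hj]
  simp only [Fin.val_mk]
  rw [if_pos trivial, if_neg hlt, if_pos hp1]
  ring

lemma form_zero (hn : 2 ≤ n) {j : Fin n} (hj : (j : ℕ) = 0)
    (x : EuclideanSpace ℝ (Fin n)) (i : Fin n) :
    formApply n j x i =
      if (i : ℕ) = 0 then -(x ⟨1, by omega⟩)
      else if (i : ℕ) = 1 then -(x ⟨0, by omega⟩) else x i := by
  rw [formApply, sub_smul_apply, inner_root_zero hn hj, inner_root_root_zero hn hj,
    root_zero_apply hj]
  by_cases h0 : (i : ℕ) = 0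
  · have hx : x i = x ⟨0, by omega⟩ := congrArg x (Fin.ext h0)
    rw [if_pos (by omega), if_pos h0, hx]
    ring
  by_cases h1 : (i : ℕ) = 1
  · have hx : x i = x ⟨1, by omega⟩ := congrArg x (Fin.ext h1)
    rw [if_pos (by omega), if_neg h0, if_pos h1, hx]
    ring
  · rw [if_neg (by omega), if_neg h0, if_neg h1]
    ring

lemma form_pos {j : Fin n} (hj : (j : ℕ) ≠ 0)
    (x : EuclideanSpace ℝ (Fin n)) (i : Fin n) :
    formApply n j x i =
      if (i : ℕ) = (j : ℕ) then x ⟨(j : ℕ) - 1, jlt j⟩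
      else if (i : ℕ) = (j : ℕ) - 1 then x j else x i := by
  rw [formApply, sub_smul_apply, inner_root_pos hj, inner_root_root_pos hj,
    root_pos_apply hj]
  by_cases h0 : (i : ℕ) = (j : ℕ)
  · have hx : x i = x j := congrArg x (Fin.ext h0)
    rw [if_pos h0, if_pos h0, hx]
    ring
  by_cases h1 : (i : ℕ) = (j : ℕ) - 1
  · have hx : x i = x ⟨(j : ℕ) - 1, jlt j⟩ := congrArg x (Fin.ext h1)
    rw [if_neg h0, if_pos (by omega), if_neg h0, if_pos h1, hx]
    ring
  · rw [if_neg h0, if_neg (by omega), if_neg h0, if_neg h1]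
    ring

end DnAux
namespace DnAux

variable {n : ℕ}

/-- values of the reflections at the special points -/
lemma form_zero_at0 (hn : 2 ≤ n) {j : Fin n} (hj : (j : ℕ) = 0)
    (x : EuclideanSpace ℝ (Fin n)) :
    formApply n j x ⟨0, by omega⟩ = -(x ⟨1, by omega⟩) := by
  rw [form_zero hn hj, if_pos rfl]

lemma form_zero_at1 (hn : 2 ≤ n) {j : Fin n} (hj : (j : ℕ) = 0)
    (x : EuclideanSpace ℝ (Fin n)) :
    formApply n j x ⟨1, by omega⟩ = -(x ⟨0, by omega⟩) := by
  rw [form_zero hn hj, if_neg (by norm_num), if_pos rfl]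

lemma form_zero_off (hn : 2 ≤ n) {j : Fin n} (hj : (j : ℕ) = 0)
    (x : EuclideanSpace ℝ (Fin n)) {i : Fin n} (h0 : (i : ℕ) ≠ 0) (h1 : (i : ℕ) ≠ 1) :
    formApply n j x i = x i := by
  rw [form_zero hn hj, if_neg h0, if_neg h1]

lemma form_pos_atj {j : Fin n} (hj : (j : ℕ) ≠ 0) (x : EuclideanSpace ℝ (Fin n)) :
    formApply n j x j = x ⟨(j : ℕ) - 1, jlt j⟩ := by
  rw [form_pos hj, if_pos rfl]

lemma form_pos_atj' {j : Fin n} (hj : (j : ℕ) ≠ 0) (x : EuclideanSpace ℝ (Fin n)) :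
    formApply n j x ⟨(j : ℕ) - 1, jlt j⟩ = x j := by
  rw [form_pos hj, if_neg (by simp only [Fin.val_mk]; omega), if_pos rfl]

lemma form_pos_off {j : Fin n} (hj : (j : ℕ) ≠ 0) (x : EuclideanSpace ℝ (Fin n))
    {i : Fin n} (h0 : (i : ℕ) ≠ (j : ℕ)) (h1 : (i : ℕ) ≠ (j : ℕ) - 1) :
    formApply n j x i = x i := by
  rw [form_pos hj, if_neg h0, if_neg h1]

/-- The invariant set: sign vectors with sum `≡ n mod 4`. -/
def Sgood (n : ℕ) : Set (EuclideanSpace ℝ (Fin n)) :=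
  {v | (∀ i, v i = 1 / Real.sqrt n ∨ v i = -(1 / Real.sqrt n)) ∧
    ∃ k : ℤ, ∑ i, v i = ((n : ℝ) - 4 * k) / Real.sqrt n}

lemma sum_shift (v g : EuclideanSpace ℝ (Fin n)) (a b : Fin n) (hab : a ≠ b)
    (h : ∀ i, i ≠ a → i ≠ b → g i = v i) :
    ∑ i, g i = (∑ i, v i) + ((g a - v a) + (g b - v b)) := by
  have h2 := sum_two (fun i => g i - v i) a b hab
    (fun i h1 h2 => by show g i - v i = 0; rw [h i h1 h2]; ring)
  simp only at h2
  have hs : ∑ i, (g i - v i) = (∑ i, g i) - ∑ i, v i := Finset.sum_sub_distrib _ _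
  rw [hs] at h2
  linarith

lemma form_preserve (hn : 4 ≤ n) (j : Fin n) {v : EuclideanSpace ℝ (Fin n)}
    (hv : v ∈ Sgood n) : formApply n j v ∈ Sgood n := by
  have hn2 : 2 ≤ n := by omega
  obtain ⟨hsgn, k, hsum⟩ := hv
  by_cases hj : (j : ℕ) = 0
  · have hab : (⟨0, by omega⟩ : Fin n) ≠ ⟨1, by omega⟩ :=
      fun h => by simpa using Fin.mk.inj_iff.mp h
    have hoff : ∀ i, i ≠ (⟨0, by omega⟩ : Fin n) → i ≠ (⟨1, by omega⟩ : Fin n) →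
        formApply n j v i = v i := by
      intro i h1 h2
      exact form_zero_off hn2 hj v (fun h => h1 (Fin.ext h)) (fun h => h2 (Fin.ext h))
    constructor
    · intro i
      by_cases h1 : i = (⟨0, by omega⟩ : Fin n)
      · subst h1; rw [form_zero_at0 hn2 hj]
        rcases hsgn ⟨1, by omega⟩ with h | h <;> rw [h] <;> simp
      by_cases h2 : i = (⟨1, by omega⟩ : Fin n)
      · subst h2; rw [form_zero_at1 hn2 hj]
        rcases hsgn ⟨0, by omega⟩ with h | h <;> rw [h] <;> simp
      · rw [hoff i h1 h2]; exact hsgn i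
    · have hS : ∑ i, formApply n j v i
          = (∑ i, v i) + ((-(v ⟨1, by omega⟩) - v ⟨0, by omega⟩)
              + (-(v ⟨0, by omega⟩) - v ⟨1, by omega⟩)) := by
        rw [sum_shift v _ _ _ hab hoff, form_zero_at0 hn2 hj, form_zero_at1 hn2 hj]
      rcases hsgn ⟨0, by omega⟩ with ha | ha <;> rcases hsgn ⟨1, by omega⟩ with hb | hb
      · refine ⟨k + 1, ?_⟩
        rw [hS, hsum, ha, hb]
        push_cast
        field_simp
        ring
      · exact ⟨k, by rw [hS, hsum, ha, hb]; ring⟩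
      · exact ⟨k, by rw [hS, hsum, ha, hb]; ring⟩
      · refine ⟨k - 1, ?_⟩
        rw [hS, hsum, ha, hb]
        push_cast
        field_simp
        ring
  · have hab : j ≠ (⟨(j : ℕ) - 1, jlt j⟩ : Fin n) :=
      fun h => (by omega : (j : ℕ) ≠ (j : ℕ) - 1) (congrArg Fin.val h)
    have hoff : ∀ i, i ≠ j → i ≠ (⟨(j : ℕ) - 1, jlt j⟩ : Fin n) →
        formApply n j v i = v i := by
      intro i h1 h2
      exact form_pos_off hj v (fun h => h1 (Fin.ext h)) (fun h => h2 (Fin.ext h))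
    constructor
    · intro i
      by_cases h1 : i = j
      · subst h1; rw [form_pos_atj hj]; exact hsgn _
      by_cases h2 : i = (⟨(j : ℕ) - 1, jlt j⟩ : Fin n)
      · subst h2; rw [form_pos_atj' hj]; exact hsgn _
      · rw [hoff i h1 h2]; exact hsgn i
    · refine ⟨k, ?_⟩
      rw [sum_shift v _ _ _ hab hoff, form_pos_atj hj, form_pos_atj' hj, hsum]
      ring

lemma form_invol (hn : 4 ≤ n) (j : Fin n) (x : EuclideanSpace ℝ (Fin n)) :
    formApply n j (formApply n j x) = x := by
  have hn2 : 2 ≤ n := by omega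
  ext i
  by_cases hj : (j : ℕ) = 0
  · by_cases h0 : (i : ℕ) = 0
    · have hi : i = (⟨0, by omega⟩ : Fin n) := Fin.ext h0
      rw [hi, form_zero_at0 hn2 hj, form_zero_at1 hn2 hj, neg_neg]
    by_cases h1 : (i : ℕ) = 1
    · have hi : i = (⟨1, by omega⟩ : Fin n) := Fin.ext h1
      rw [hi, form_zero_at1 hn2 hj, form_zero_at0 hn2 hj, neg_neg]
    · rw [form_zero_off hn2 hj _ h0 h1, form_zero_off hn2 hj _ h0 h1]
  · by_cases h0 : (i : ℕ) = (j : ℕ)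
    · have hi : i = j := Fin.ext h0
      rw [hi, form_pos_atj hj, form_pos_atj' hj]
    by_cases h1 : (i : ℕ) = (j : ℕ) - 1
    · have hi : i = (⟨(j : ℕ) - 1, jlt j⟩ : Fin n) := Fin.ext h1
      rw [hi, form_pos_atj' hj, form_pos_atj hj]
    · rw [form_pos_off hj _ h0 h1, form_pos_off hj _ h0 h1]

end DnAux
namespace DnAux

variable {n : ℕ}

lemma weyl_preserve (hn : 4 ≤ n) {w : EuclideanSpace ℝ (Fin n) ≃ₗᵢ[ℝ] EuclideanSpace ℝ (Fin n)}
    (hw : w ∈ WeylD n) : ∀ v ∈ Sgood n, w v ∈ Sgood n := by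
  have main : (∀ v ∈ Sgood n, w v ∈ Sgood n) ∧ (∀ v ∈ Sgood n, w⁻¹ v ∈ Sgood n) := by
    refine Subgroup.closure_induction
      (p := fun g _ => (∀ v ∈ Sgood n, g v ∈ Sgood n) ∧ (∀ v ∈ Sgood n, g⁻¹ v ∈ Sgood n))
      ?_ ?_ ?_ ?_ hw
    · rintro f ⟨j, hf⟩
      have hff : f * f = 1 := LinearIsometryEquiv.ext fun x => by
        show f (f x) = x
        rw [hf x, hf _]
        exact form_invol hn j x
      have hfinv : f⁻¹ = f := inv_eq_of_mul_eq_one_right hff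
      have hone : ∀ v ∈ Sgood n, f v ∈ Sgood n := by
        intro v hv
        rw [hf v]
        exact form_preserve hn j hv
      exact ⟨hone, by rw [hfinv]; exact hone⟩
    · simp
    · rintro g h _ _ ⟨hg1, hg2⟩ ⟨hh1, hh2⟩
      constructor
      · intro v hv
        have : (g * h) v = g (h v) := rfl
        rw [this]
        exact hg1 _ (hh1 _ hv)
      · intro v hv
        have : (g * h)⁻¹ v = h⁻¹ (g⁻¹ v) := by rw [mul_inv_rev]; rfl
        rw [this]
        exact hh2 _ (hg2 _ hv)
    · rintro g _ ⟨hg1, hg2⟩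
      exact ⟨hg2, by simpa using hg1⟩
  exact main.1

lemma sum_const_euc (c : ℝ) : ∑ _i : Fin n, c = (n : ℝ) * c := by
  rw [Finset.sum_const, Finset.card_univ, Fintype.card_fin, nsmul_eq_mul]

lemma u1hat_mem_Sgood : u1hatD n ∈ Sgood n := by
  constructor
  · intro i; left; rfl
  · refine ⟨0, ?_⟩
    have : ∑ i : Fin n, u1hatD n i = (n : ℝ) * (1 / Real.sqrt n) := sum_const_euc _
    rw [this]
    push_cast
    ring

lemma inner_u1_eq (v : EuclideanSpace ℝ (Fin n)) :
    ⟪u1hatD n, v⟫ = (∑ i, v i) / Real.sqrt n := by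
  rw [inner_euc]
  rw [Finset.sum_div]  -- check direction
  congr 1
  funext i
  show u1hatD n i * v i = v i / Real.sqrt n
  rw [u1hatD, PiLp.toLp_apply]
  ring
end DnAux
namespace DnAux

variable {n : ℕ}

lemma inner_val (hn : 4 ≤ n) {v : EuclideanSpace ℝ (Fin n)} (hv : v ∈ Sgood n) :
    ∃ k : ℕ, 2 * k ≤ n ∧ ⟪u1hatD n, v⟫ = ((n : ℝ) - 4 * k) / n := by
  obtain ⟨hsgn, k, hsum⟩ := hv
  have hnpos : (0 : ℝ) < n := by
    have : (4 : ℝ) ≤ n := by exact_mod_cast hn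
    linarith
  have hs : (0 : ℝ) < Real.sqrt n := Real.sqrt_pos.mpr hnpos
  have hposc : (0 : ℝ) ≤ 1 / Real.sqrt n := by positivity
  have hup : ∑ i, v i ≤ (n : ℝ) / Real.sqrt n := by
    calc ∑ i, v i ≤ ∑ _i : Fin n, (1 / Real.sqrt n) := by
          refine Finset.sum_le_sum fun i _ => ?_
          rcases hsgn i with h | h <;> rw [h] <;> linarith
      _ = (n : ℝ) * (1 / Real.sqrt n) := sum_const_euc _
      _ = (n : ℝ) / Real.sqrt n := by ring
  have hlo : -((n : ℝ) / Real.sqrt n) ≤ ∑ i, v i := by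
    calc -((n : ℝ) / Real.sqrt n) = (n : ℝ) * (-(1 / Real.sqrt n)) := by ring
      _ = ∑ _i : Fin n, (-(1 / Real.sqrt n)) := (sum_const_euc _).symm
      _ ≤ ∑ i, v i := by
          refine Finset.sum_le_sum fun i _ => ?_
          rcases hsgn i with h | h <;> rw [h] <;> linarith
  rw [hsum] at hup hlo
  have hk0 : (0 : ℤ) ≤ k := by
    have := (div_le_div_iff_of_pos_right hs).mp hup
    have : (0 : ℝ) ≤ 4 * (k : ℝ) := by linarith
    have : (0 : ℝ) ≤ (k : ℝ) := by linarith
    exact_mod_cast this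
  have hk2 : 2 * k.toNat ≤ n := by
    rw [neg_div'] at hlo
    have h1 := (div_le_div_iff_of_pos_right hs).mp hlo
    have h2 : 4 * (k : ℝ) ≤ 2 * (n : ℝ) := by linarith
    have h3 : 2 * (k : ℝ) ≤ (n : ℝ) := by linarith
    have h4 : 2 * k ≤ (n : ℤ) := by exact_mod_cast h3
    omega
  refine ⟨k.toNat, hk2, ?_⟩
  rw [inner_u1_eq, hsum, div_div, Real.mul_self_sqrt (le_of_lt hnpos)]
  congr 2
  have : ((k.toNat : ℤ) : ℝ) = (k : ℝ) := by
    congr 1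
    omega
  push_cast at this ⊢
  rw [this]

end DnAux
namespace DnAux

variable {n : ℕ}

/-- swap isometry for `j ≠ 0` -/
def swapIso (j : Fin n) : EuclideanSpace ℝ (Fin n) ≃ₗᵢ[ℝ] EuclideanSpace ℝ (Fin n) :=
  LinearIsometryEquiv.piLpCongrLeft 2 ℝ ℝ (Equiv.swap j ⟨(j : ℕ) - 1, jlt j⟩)

lemma swapIso_apply (j : Fin n) (x : EuclideanSpace ℝ (Fin n)) (i : Fin n) :
    swapIso j x i = x (Equiv.swap j ⟨(j : ℕ) - 1, jlt j⟩ i) := by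
  rw [swapIso, LinearIsometryEquiv.piLpCongrLeft_apply]
  show x ((Equiv.swap j ⟨(j : ℕ) - 1, jlt j⟩).symm i) = _
  rw [Equiv.symm_swap]

lemma swapIso_eq_form {j : Fin n} (hj : (j : ℕ) ≠ 0) (x : EuclideanSpace ℝ (Fin n)) :
    swapIso j x = formApply n j x := by
  ext i
  rw [swapIso_apply, form_pos hj]
  rcases eq_or_ne i j with rfl | h0
  · rw [Equiv.swap_apply_left, if_pos rfl]
  rcases eq_or_ne i (⟨(j : ℕ) - 1, jlt j⟩ : Fin n) with rfl | h1
  · rw [Equiv.swap_apply_right, if_neg (by simp only [Fin.val_mk]; omega), if_pos rfl]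
  · rw [Equiv.swap_apply_of_ne_of_ne h0 h1,
      if_neg (fun h => h0 (Fin.ext h)), if_neg (fun h => h1 (Fin.ext h))]

/-- the isometry for `j = 0` : swap coordinates 0,1 and negate both -/
def flipIso (hn : 2 ≤ n) : EuclideanSpace ℝ (Fin n) ≃ₗᵢ[ℝ] EuclideanSpace ℝ (Fin n) :=
  (LinearIsometryEquiv.piLpCongrLeft 2 ℝ ℝ
      (Equiv.swap (⟨0, by omega⟩ : Fin n) ⟨1, by omega⟩)).trans
    (LinearIsometryEquiv.piLpCongrRight 2
      (fun i : Fin n => if (i : ℕ) ≤ 1 then LinearIsometryEquiv.neg ℝ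
        else LinearIsometryEquiv.refl ℝ ℝ))

lemma flipIso_apply (hn : 2 ≤ n) (x : EuclideanSpace ℝ (Fin n)) (i : Fin n) :
    flipIso hn x i =
      if (i : ℕ) ≤ 1 then -(x (Equiv.swap (⟨0, by omega⟩ : Fin n) ⟨1, by omega⟩ i))
      else x i := by
  rw [flipIso, LinearIsometryEquiv.trans_apply, LinearIsometryEquiv.piLpCongrRight_apply]
  have hswap : (LinearIsometryEquiv.piLpCongrLeft 2 ℝ ℝ
      (Equiv.swap (⟨0, by omega⟩ : Fin n) ⟨1, by omega⟩)) x i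
      = x (Equiv.swap (⟨0, by omega⟩ : Fin n) ⟨1, by omega⟩ i) := by
    rw [LinearIsometryEquiv.piLpCongrLeft_apply]
    show x ((Equiv.swap _ _).symm i) = _
    rw [Equiv.symm_swap]
  show (if (i : ℕ) ≤ 1 then LinearIsometryEquiv.neg ℝ else LinearIsometryEquiv.refl ℝ ℝ)
      ((LinearIsometryEquiv.piLpCongrLeft 2 ℝ ℝ
        (Equiv.swap (⟨0, by omega⟩ : Fin n) ⟨1, by omega⟩)) x i) = _
  rw [hswap]
  by_cases h : (i : ℕ) ≤ 1
  · rw [if_pos h, if_pos h]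
    rfl
  · rw [if_neg h, if_neg h]
    have : Equiv.swap (⟨0, by omega⟩ : Fin n) (⟨1, by omega⟩ : Fin n) i = i :=
      Equiv.swap_apply_of_ne_of_ne (fun hh => h (by rw [hh]; norm_num))
        (fun hh => h (by rw [hh]))
    rw [this]
    rfl

lemma flipIso_eq_form (hn : 2 ≤ n) {j : Fin n} (hj : (j : ℕ) = 0)
    (x : EuclideanSpace ℝ (Fin n)) :
    flipIso hn x = formApply n j x := by
  ext i
  rw [flipIso_apply hn, form_zero hn hj]
  by_cases h0 : (i : ℕ) = 0
  · have hi : i = (⟨0, by omega⟩ : Fin n) := Fin.ext h0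
    rw [hi]
    rw [if_pos (by norm_num), if_pos rfl, Equiv.swap_apply_left]
  by_cases h1 : (i : ℕ) = 1
  · have hi : i = (⟨1, by omega⟩ : Fin n) := Fin.ext h1
    rw [hi]
    rw [if_pos (by norm_num), if_neg (by norm_num), if_pos rfl, Equiv.swap_apply_right]
  · rw [if_neg (by omega), if_neg h0, if_neg h1]
end DnAux
namespace DnAux

variable {n : ℕ}

def inOrbit (n : ℕ) (v : EuclideanSpace ℝ (Fin n)) : Prop :=
  ∃ w ∈ WeylD n, w (u1hatD n) = v

lemma gen_exists (hn : 4 ≤ n) (j : Fin n) :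
    ∃ s : EuclideanSpace ℝ (Fin n) ≃ₗᵢ[ℝ] EuclideanSpace ℝ (Fin n),
      s ∈ WeylD n ∧ ∀ x, s x = formApply n j x := by
  by_cases hj : (j : ℕ) = 0
  · exact ⟨flipIso (by omega), Subgroup.subset_closure ⟨j, fun x => flipIso_eq_form _ hj x⟩,
      fun x => flipIso_eq_form _ hj x⟩
  · exact ⟨swapIso j, Subgroup.subset_closure ⟨j, fun x => swapIso_eq_form hj x⟩,
      fun x => swapIso_eq_form hj x⟩

lemma inOrbit_form (hn : 4 ≤ n) (j : Fin n) {v : EuclideanSpace ℝ (Fin n)}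
    (h : inOrbit n v) : inOrbit n (formApply n j v) := by
  obtain ⟨w, hw, hwv⟩ := h
  obtain ⟨s, hs, hsf⟩ := gen_exists hn j
  refine ⟨s * w, mul_mem hs hw, ?_⟩
  show s (w (u1hatD n)) = _
  rw [hwv, hsf]

def tailvec (n k : ℕ) : EuclideanSpace ℝ (Fin n) :=
  WithLp.toLp 2 (fun i => (if n - 2 * k ≤ (i : ℕ) then (-1 : ℝ) else 1) / Real.sqrt n)

def gvec (n k a b : ℕ) : EuclideanSpace ℝ (Fin n) :=
  WithLp.toLp 2 (fun i => (if (i : ℕ) = a ∨ (i : ℕ) = b ∨ n - 2 * k ≤ (i : ℕ) then (-1 : ℝ) else 1) /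
    Real.sqrt n)

lemma flip_tail (hn : 4 ≤ n) {k : ℕ} (hk : 2 * k + 2 ≤ n) {j : Fin n} (hj : (j : ℕ) = 0) :
    formApply n j (tailvec n k) = gvec n k 0 1 := by
  ext i
  rw [form_zero (by omega) hj]
  by_cases h0 : (i : ℕ) = 0
  · rw [if_pos h0]
    simp only [tailvec, gvec, Fin.val_mk, PiLp.toLp_apply]
    rw [if_neg (by omega), if_pos (by omega)]
    ring
  by_cases h1 : (i : ℕ) = 1
  · rw [if_neg h0, if_pos h1]
    simp only [tailvec, gvec, Fin.val_mk, PiLp.toLp_apply]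
    rw [if_neg (by omega), if_pos (by omega)]
    ring
  · rw [if_neg h0, if_neg h1]
    simp only [tailvec, gvec, PiLp.toLp_apply]
    have hiff : (n - 2 * k ≤ (i : ℕ)) ↔ ((i : ℕ) = 0 ∨ (i : ℕ) = 1 ∨ n - 2 * k ≤ (i : ℕ)) := by
      omega
    congr 1
    exact if_congr hiff rfl rfl

lemma moveb {k a b : ℕ} (ha : a < b) (hb : b + 1 + 2 * k < n) :
    formApply n ⟨b + 1, by omega⟩ (gvec n k a b) = gvec n k a (b + 1) := by
  ext i
  rw [form_pos (by simp only [Fin.val_mk]; omega)]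
  simp only [Fin.val_mk]
  by_cases h0 : (i : ℕ) = b + 1
  · rw [if_pos h0]
    simp only [gvec, Fin.val_mk, PiLp.toLp_apply]
    rw [if_pos (by omega), if_pos (by omega)]
  by_cases h1 : (i : ℕ) = b
  · rw [if_neg h0, if_pos (by omega)]
    simp only [gvec, Fin.val_mk, PiLp.toLp_apply]
    rw [if_neg (by omega), if_neg (by omega)]
  · rw [if_neg h0, if_neg (by omega)]
    simp only [gvec, PiLp.toLp_apply]
    have hiff : ((i : ℕ) = a ∨ (i : ℕ) = b ∨ n - 2 * k ≤ (i : ℕ)) ↔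
        ((i : ℕ) = a ∨ (i : ℕ) = b + 1 ∨ n - 2 * k ≤ (i : ℕ)) := by omega
    simp only [hiff]

lemma movea {k a b : ℕ} (hab : a + 1 < b) (hb : b + 2 * k < n) :
    formApply n ⟨a + 1, by omega⟩ (gvec n k a b) = gvec n k (a + 1) b := by
  ext i
  rw [form_pos (by simp only [Fin.val_mk]; omega)]
  simp only [Fin.val_mk]
  by_cases h0 : (i : ℕ) = a + 1
  · rw [if_pos h0]
    simp only [gvec, Fin.val_mk, PiLp.toLp_apply]
    rw [if_pos (by omega), if_pos (by omega)]
  by_cases h1 : (i : ℕ) = a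
  · rw [if_neg h0, if_pos (by omega)]
    simp only [gvec, Fin.val_mk, PiLp.toLp_apply]
    rw [if_neg (by omega), if_neg (by omega)]
  · rw [if_neg h0, if_neg (by omega)]
    simp only [gvec, PiLp.toLp_apply]
    have hiff : ((i : ℕ) = a ∨ (i : ℕ) = b ∨ n - 2 * k ≤ (i : ℕ)) ↔
        ((i : ℕ) = a + 1 ∨ (i : ℕ) = b ∨ n - 2 * k ≤ (i : ℕ)) := by omega
    simp only [hiff]

lemma gvec_end {k : ℕ} (hk : 2 * k + 2 ≤ n) :
    gvec n k (n - 2 * k - 2) (n - 2 * k - 1) = tailvec n (k + 1) := by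
  ext i
  simp only [gvec, tailvec, PiLp.toLp_apply]
  have hiff : ((i : ℕ) = n - 2 * k - 2 ∨ (i : ℕ) = n - 2 * k - 1 ∨ n - 2 * k ≤ (i : ℕ)) ↔
      (n - 2 * (k + 1) ≤ (i : ℕ)) := by
    have := i.isLt
    omega
  simp only [hiff]

lemma tail_zero : tailvec n 0 = u1hatD n := by
  ext i
  simp only [tailvec, u1hatD, PiLp.toLp_apply]
  rw [if_neg (by have := i.isLt; omega)]

lemma chainb (hn : 4 ≤ n) (k : ℕ) :
    ∀ d : ℕ, d + 1 + 2 * k < n → inOrbit n (gvec n k 0 1) → inOrbit n (gvec n k 0 (d + 1)) := by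
  intro d
  induction d with
  | zero => intro _ h; exact h
  | succ d ih =>
    intro hd h1
    have prev := ih (by omega) h1
    have h2 := inOrbit_form hn (⟨d + 1 + 1, by omega⟩ : Fin n) prev
    rwa [moveb (show 0 < d + 1 by omega) (by omega)] at h2

lemma chaina (hn : 4 ≤ n) (k : ℕ) (hk : 2 * k + 2 ≤ n) :
    ∀ d : ℕ, d ≤ n - 2 * k - 2 → inOrbit n (gvec n k 0 (n - 2 * k - 1)) →
      inOrbit n (gvec n k d (n - 2 * k - 1)) := by
  intro d
  induction d with
  | zero => intro _ h; exact h
  | succ d ih =>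
    intro hd h1
    have prev := ih (by omega) h1
    have h2 := inOrbit_form hn (⟨d + 1, by omega⟩ : Fin n) prev
    rwa [movea (by omega) (by omega)] at h2

lemma tail_orbit (hn : 4 ≤ n) : ∀ k : ℕ, 2 * k ≤ n → inOrbit n (tailvec n k) := by
  intro k
  induction k with
  | zero =>
    intro _
    exact ⟨1, one_mem _, by rw [tail_zero]; rfl⟩
  | succ k ih =>
    intro hk2
    have h1 := ih (by omega)
    have hflip := inOrbit_form hn (⟨0, by omega⟩ : Fin n) h1
    rw [flip_tail hn (by omega) rfl] at hflip
    have h2 := chainb hn k (n - 2 * k - 2) (by omega) hflip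
    rw [show n - 2 * k - 2 + 1 = n - 2 * k - 1 by omega] at h2
    have h3 := chaina hn k (by omega) (n - 2 * k - 2) le_rfl h2
    rwa [gvec_end (by omega)] at h3

lemma tail_sum (hn : 4 ≤ n) (k : ℕ) (hk : 2 * k ≤ n) :
    ∑ i, tailvec n k i = ((n : ℝ) - 4 * k) / Real.sqrt n := by
  have step1 : ∑ i, tailvec n k i
      = (∑ i : Fin n, (if n - 2 * k ≤ (i : ℕ) then (-1 : ℝ) else 1)) / Real.sqrt n := by
    rw [Finset.sum_div]
    rfl
  rw [step1]
  congr 1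
  rw [Fin.sum_univ_eq_sum_range (fun m => if n - 2 * k ≤ m then (-1 : ℝ) else 1)]
  rw [Finset.sum_ite]
  have hf1 : (Finset.range n).filter (fun m => n - 2 * k ≤ m) = Finset.Ico (n - 2 * k) n := by
    ext m
    simp only [Finset.mem_filter, Finset.mem_range, Finset.mem_Ico]
    omega
  have hf2 : (Finset.range n).filter (fun m => ¬ n - 2 * k ≤ m) = Finset.range (n - 2 * k) := by
    ext m
    simp only [Finset.mem_filter, Finset.mem_range]
    omega
  rw [hf1, hf2, Finset.sum_const, Finset.sum_const, Nat.card_Ico, Finset.card_range]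
  rw [show n - (n - 2 * k) = 2 * k by omega]
  rw [nsmul_eq_mul, nsmul_eq_mul, Nat.cast_sub hk]
  push_cast
  ring

lemma inner_tail (hn : 4 ≤ n) (k : ℕ) (hk : 2 * k ≤ n) :
    ⟪u1hatD n, tailvec n k⟫ = ((n : ℝ) - 4 * k) / n := by
  rw [inner_u1_eq, tail_sum hn k hk, div_div, Real.mul_self_sqrt (by positivity)]

end DnAux


theorem inner_u1hatD_orbit (n : ℕ) (hn : 4 ≤ n) :
    {t : ℝ | ∃ w ∈ WeylD n, ⟪u1hatD n, w (u1hatD n)⟫ = t} =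
      {t : ℝ | ∃ k : ℕ, 2 * k ≤ n ∧ t = ((n : ℝ) - 4 * k) / n} := by
  
  ext t
  simp only [Set.mem_setOf_eq]
  constructor
  · rintro ⟨w, hw, rfl⟩
    have hmem := DnAux.weyl_preserve hn hw _ DnAux.u1hat_mem_Sgood
    obtain ⟨k, hk, hval⟩ := DnAux.inner_val hn hmem
    exact ⟨k, hk, hval⟩
  · rintro ⟨k, hk, rfl⟩
    obtain ⟨w, hw, hwv⟩ := DnAux.tail_orbit hn k hk
    exact ⟨w, hw, by rw [hwv, DnAux.inner_tail hn k hk]⟩
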